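/- Assume k₁,k₂,k ∈ ℤ with k₁ ≤ k₂, let β₂ ∈ ℝ, and let g : ℝ³ → [0,∞) be an L² function supported in Ĩ_k × ℝ × ℝ. Let S' = {(ξ₁,ξ₂,β) ∈ ℝ³ : ξ₁ ∈ Ĩ_{k₁}, ξ₂ ∈ Ĩ_{k₂}, ξ₁+ξ₂ ≥ 0, |β| ≤ 2^{−10}(ξ₁+ξ₂)}, and define A(ξ₁,ξ₂,β) = √3·ξ₁² − √3·ξ₂² + βξ₁ and B(ξ₁,ξ₂,β) = ξ₁ξ₂β·(2√3 + β/(ξ₁+ξ₂)). Then (∫_{S'} |g(ξ₁+ξ₂, A(ξ₁,ξ₂,β)+β₂(ξ₁+ξ₂), B(ξ₁,ξ₂,β))|² dξ₁dξ₂dβ)^{1/2} ≲ 2^{−(k₁+k₂+k)/2}·‖g‖_{L²}, with the implicit constant independent of all parameters. -/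

import Mathlib

open MeasureTheory
open scoped ENNReal

/-- The dyadic frequency annulus `Ĩ_k = {ξ : 2^(k-1) ≤ |ξ| ≤ 2^(k+1)}`. -/
def Itilde (k : ℤ) : Set ℝ := {ξ : ℝ | (2 : ℝ) ^ (k - 1) ≤ |ξ| ∧ |ξ| ≤ (2 : ℝ) ^ (k + 1)}

noncomputable def e3 : (Fin 3 → ℝ) ≃ₗ[ℝ] ℝ × ℝ × ℝ where
  toFun v := (v 0, v 1, v 2)
  invFun p := ![p.1, p.2.1, p.2.2]
  map_add' v w := by simp
  map_smul' c v := by simp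
  left_inv v := by funext i; fin_cases i <;> simp
  right_inv p := by simp

noncomputable def L3 (a₁₁ a₁₂ a₁₃ a₂₁ a₂₂ a₂₃ a₃₁ a₃₂ a₃₃ : ℝ) : ℝ × ℝ × ℝ →L[ℝ] ℝ × ℝ × ℝ :=
  LinearMap.toContinuousLinearMap
  { toFun := fun p => (a₁₁ * p.1 + a₁₂ * p.2.1 + a₁₃ * p.2.2,
      a₂₁ * p.1 + a₂₂ * p.2.1 + a₂₃ * p.2.2,
      a₃₁ * p.1 + a₃₂ * p.2.1 + a₃₃ * p.2.2)
    map_add' := fun p q => by simp [Prod.ext_iff]; constructor <;> [ring; constructor <;> ring]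
    map_smul' := fun c p => by simp [Prod.ext_iff, smul_eq_mul]; constructor <;> [ring; constructor <;> ring] }

lemma L3_apply (a₁₁ a₁₂ a₁₃ a₂₁ a₂₂ a₂₃ a₃₁ a₃₂ a₃₃ : ℝ) (p : ℝ × ℝ × ℝ) :
    L3 a₁₁ a₁₂ a₁₃ a₂₁ a₂₂ a₂₃ a₃₁ a₃₂ a₃₃ p =
      (a₁₁ * p.1 + a₁₂ * p.2.1 + a₁₃ * p.2.2,
      a₂₁ * p.1 + a₂₂ * p.2.1 + a₂₃ * p.2.2,
      a₃₁ * p.1 + a₃₂ * p.2.1 + a₃₃ * p.2.2) := rfl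

noncomputable def b3 : Module.Basis (Fin 3) ℝ (ℝ × ℝ × ℝ) := (Pi.basisFun ℝ (Fin 3)).map e3

lemma det_L3 (a₁₁ a₁₂ a₁₃ a₂₁ a₂₂ a₂₃ a₃₁ a₃₂ a₃₃ : ℝ) :
    (L3 a₁₁ a₁₂ a₁₃ a₂₁ a₂₂ a₂₃ a₃₁ a₃₂ a₃₃ : ℝ × ℝ × ℝ →ₗ[ℝ] ℝ × ℝ × ℝ).det =
      a₁₁ * (a₂₂ * a₃₃ - a₂₃ * a₃₂) - a₁₂ * (a₂₁ * a₃₃ - a₂₃ * a₃₁) +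
        a₁₃ * (a₂₁ * a₃₂ - a₂₂ * a₃₁) := by
  rw [← LinearMap.det_toMatrix b3]
  have : (LinearMap.toMatrix b3 b3 (L3 a₁₁ a₁₂ a₁₃ a₂₁ a₂₂ a₂₃ a₃₁ a₃₂ a₃₃ :
      ℝ × ℝ × ℝ →ₗ[ℝ] ℝ × ℝ × ℝ)) =
      !![a₁₁, a₁₂, a₁₃; a₂₁, a₂₂, a₂₃; a₃₁, a₃₂, a₃₃] := by
    ext i j
    fin_cases i <;> fin_cases j <;>
      simp [LinearMap.toMatrix_apply, b3, e3, L3, Pi.basisFun_apply]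
  rw [this, Matrix.det_fin_three]
  simp [Matrix.cons_val_zero, Matrix.cons_val_one]
  ring

lemma det_L3' (a₁₁ a₁₂ a₁₃ a₂₁ a₂₂ a₂₃ a₃₁ a₃₂ a₃₃ : ℝ) :
    (L3 a₁₁ a₁₂ a₁₃ a₂₁ a₂₂ a₂₃ a₃₁ a₃₂ a₃₃).det =
      a₁₁ * (a₂₂ * a₃₃ - a₂₃ * a₃₂) - a₁₂ * (a₂₁ * a₃₃ - a₂₃ * a₃₁) +
        a₁₃ * (a₂₁ * a₃₂ - a₂₂ * a₃₁) :=
  det_L3 a₁₁ a₁₂ a₁₃ a₂₁ a₂₂ a₂₃ a₃₁ a₃₂ a₃₃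

lemma hasFDerivAt_Phi (s β₂ : ℝ) (q : ℝ × ℝ × ℝ) (hu : q.1 + q.2.1 ≠ 0) :
    HasFDerivAt (fun q : ℝ × ℝ × ℝ => (q.1 + q.2.1,
        s * q.1 ^ 2 - s * q.2.1 ^ 2 + q.2.2 * q.1 + β₂ * (q.1 + q.2.1),
        q.1 * q.2.1 * q.2.2 * (2 * s + q.2.2 / (q.1 + q.2.1))))
      (L3 1 1 0
        (2 * s * q.1 + q.2.2 + β₂) (-(2 * s * q.2.1) + β₂) q.1
        (q.2.1 * q.2.2 * (2 * s + q.2.2 / (q.1 + q.2.1)) -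
          q.1 * q.2.1 * q.2.2 ^ 2 / (q.1 + q.2.1) ^ 2)
        (q.1 * q.2.2 * (2 * s + q.2.2 / (q.1 + q.2.1)) -
          q.1 * q.2.1 * q.2.2 ^ 2 / (q.1 + q.2.1) ^ 2)
        (q.1 * q.2.1 * (2 * s + 2 * q.2.2 / (q.1 + q.2.1)))) q := by
  have hx : HasFDerivAt (fun q : ℝ × ℝ × ℝ => q.1)
      (ContinuousLinearMap.fst ℝ ℝ (ℝ × ℝ)) q := hasFDerivAt_fst
  have hy : HasFDerivAt (fun q : ℝ × ℝ × ℝ => q.2.1)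
      ((ContinuousLinearMap.fst ℝ ℝ ℝ).comp (ContinuousLinearMap.snd ℝ ℝ (ℝ × ℝ))) q :=
    hasFDerivAt_fst.comp q hasFDerivAt_snd
  have hb : HasFDerivAt (fun q : ℝ × ℝ × ℝ => q.2.2)
      ((ContinuousLinearMap.snd ℝ ℝ ℝ).comp (ContinuousLinearMap.snd ℝ ℝ (ℝ × ℝ))) q :=
    hasFDerivAt_snd.comp q hasFDerivAt_snd
  have h1 := hx.add hy
  have h2 := ((((hx.mul hx).const_mul s).sub ((hy.mul hy).const_mul s)).add (hb.mul hx)).add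
    ((hx.add hy).const_mul β₂)
  have hinv : HasFDerivAt (fun q : ℝ × ℝ × ℝ => (q.1 + q.2.1)⁻¹)
      ((-ContinuousLinearMap.mulLeftRight ℝ ℝ (q.1 + q.2.1)⁻¹ (q.1 + q.2.1)⁻¹).comp
        (ContinuousLinearMap.fst ℝ ℝ (ℝ × ℝ) +
          (ContinuousLinearMap.fst ℝ ℝ ℝ).comp (ContinuousLinearMap.snd ℝ ℝ (ℝ × ℝ)))) q :=
    (hasFDerivAt_inv' hu).comp q (hx.add hy)
  have h3 := ((hx.mul hy).mul hb).mul ((hasFDerivAt_const (2 * s) q).add (hb.mul hinv))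
  simp only [pow_two, div_eq_mul_inv]
  refine (h1.prodMk (h2.prodMk h3)).congr_fderiv ?_
  ext <;>
    · simp only [ContinuousLinearMap.coe_comp', Function.comp_apply,
        ContinuousLinearMap.prod_apply, ContinuousLinearMap.add_apply,
        ContinuousLinearMap.smul_apply, ContinuousLinearMap.sub_apply,
        ContinuousLinearMap.neg_apply, ContinuousLinearMap.zero_apply,
        ContinuousLinearMap.coe_fst', ContinuousLinearMap.coe_snd',
        ContinuousLinearMap.inl_apply, ContinuousLinearMap.inr_apply,
        ContinuousLinearMap.mulLeftRight_apply, L3_apply, smul_eq_mul,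
        Pi.mul_apply, Pi.add_apply]
      try field_simp
      try ring

noncomputable def Phi (β₂ : ℝ) : ℝ × ℝ × ℝ → ℝ × ℝ × ℝ := fun q =>
  (q.1 + q.2.1,
   Real.sqrt 3 * q.1 ^ 2 - Real.sqrt 3 * q.2.1 ^ 2 + q.2.2 * q.1 + β₂ * (q.1 + q.2.1),
   q.1 * q.2.1 * q.2.2 * (2 * Real.sqrt 3 + q.2.2 / (q.1 + q.2.1)))

def Tset (k₁ k₂ k : ℤ) : Set (ℝ × ℝ × ℝ) :=
  {q | q.1 ∈ Itilde k₁ ∧ q.2.1 ∈ Itilde k₂ ∧ 0 ≤ q.1 + q.2.1 ∧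
    |q.2.2| ≤ (2 : ℝ) ^ (-10 : ℤ) * (q.1 + q.2.1) ∧ (q.1 + q.2.1) ∈ Itilde k}

lemma sqrt3_lb : (1.7 : ℝ) ≤ Real.sqrt 3 := by
  nlinarith [Real.sq_sqrt (by norm_num : (0:ℝ) ≤ 3), Real.sqrt_nonneg 3]

lemma sqrt3_ub : Real.sqrt 3 ≤ 1.8 := by
  nlinarith [Real.sq_sqrt (by norm_num : (0:ℝ) ≤ 3), Real.sqrt_nonneg 3]

set_option maxHeartbeats 1000000 in
lemma Tset_injOn (k₁ k₂ k : ℤ) (hk : k₁ ≤ k₂) (β₂ : ℝ) :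
    Set.InjOn (Phi β₂) (Tset k₁ k₂ k) := by
  set s := Real.sqrt 3 with hs
  have hslb : (1.7 : ℝ) ≤ s := sqrt3_lb
  have hsub : s ≤ 1.8 := sqrt3_ub
  rintro ⟨x, y, b⟩ hp ⟨x', y', b'⟩ hq h
  simp only [Tset, Itilde, Set.mem_setOf_eq] at hp hq
  obtain ⟨⟨hx1, hx2⟩, ⟨hy1, hy2⟩, hu0, hb, hu1, hu2⟩ := hp
  obtain ⟨⟨hx1', hx2'⟩, ⟨hy1', hy2'⟩, hu0', hb', hu1', hu2'⟩ := hq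
  simp only [Phi, Prod.mk.injEq] at h
  obtain ⟨h1, h2, h3⟩ := h
  have hA : (0:ℝ) < 2 ^ (k₁ - 1) := by positivity
  have hB : (0:ℝ) < 2 ^ (k₂ - 1) := by positivity
  have hU : (0:ℝ) < 2 ^ (k - 1) := by positivity
  have hupos : 0 < x + y := lt_of_lt_of_le hU (by rwa [abs_of_nonneg hu0] at hu1)
  have hune : x + y ≠ 0 := ne_of_gt hupos
  have hx0 : x ≠ 0 := by
    intro hx; rw [hx, abs_zero] at hx1; linarith
  have hy0' : y' ≠ 0 := by
    intro hy; rw [hy, abs_zero] at hy1'; linarith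
  have hy0 : y ≠ 0 := by
    intro hy; rw [hy, abs_zero] at hy1; linarith
  have hsmall : (2:ℝ) ^ (-10 : ℤ) = 1 / 1024 := by norm_num
  rw [hsmall] at hb hb'
  have hbabs : |b| ≤ (x + y) / 1024 := by linarith
  have hbabs' : |b'| ≤ (x + y) / 1024 := by rw [h1]; linarith [hb']
  have hble := abs_le.mp hbabs
  have hble' := abs_le.mp hbabs'
  have hsu : 1.7 * (x + y) ≤ s * (x + y) :=
    mul_le_mul_of_nonneg_right hslb (le_of_lt hupos)
  have hd : 0 < 2 * s * (x + y) + b := by linarith [hble.1]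
  have hd' : 0 < 2 * s * (x + y) + b' := by linarith [hble'.1]
  have h2' : s * x ^ 2 - s * y ^ 2 + b * x = s * x' ^ 2 - s * y' ^ 2 + b' * x' := by
    linear_combination h2 - β₂ * h1
  have hV : (2 * s * (x + y) + b) * x = (2 * s * (x + y) + b') * x' := by
    linear_combination h2' + (s * (x + y + x' + y') - 2 * s * x') * h1
  rw [← h1] at h3
  have h3' : x * y * b * (2 * s * (x + y) + b) =
      x' * y' * b' * (2 * s * (x + y) + b') := by
    field_simp at h3
    linear_combination h3
  have hdx0 : (2 * s * (x + y) + b) * x ≠ 0 := mul_ne_zero (ne_of_gt hd) hx0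
  have hW : y * b = y' * b' := by
    have e : ((2 * s * (x + y) + b) * x) * (y * b) =
        ((2 * s * (x + y) + b) * x) * (y' * b') := by
      rw [hV]; linear_combination h3' - y * b * hV
    exact mul_left_cancel₀ hdx0 e
  by_cases hbb : b = b'
  · subst hbb
    have hx : x = x' := mul_left_cancel₀ (ne_of_gt hd) hV
    subst hx
    have : y = y' := by linarith
    subst this
    rfl
  · exfalso
    have hstar : y * b = 2 * s * (x + y) ^ 2 + (x + y) * (b + b') -
        (2 * s * (x + y) + b) * x := by
      have hdiff : (y * b) * (b - b') = (2 * s * (x + y) ^ 2 + (x + y) * (b + b') -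
          (2 * s * (x + y) + b) * x) * (b - b') := by
        linear_combination (-b') * hV + (b' * (2 * s * (x + y) + b')) * h1 -
          (2 * s * (x + y) + b') * hW
      exact mul_right_cancel₀ (sub_ne_zero.mpr hbb) hdiff
    have hG3 : 2 * s * (x + y) * (y * b) + (x + y) * (b * b') = 0 := by
      linear_combination (-b) * hstar
    have hbb2 : 2 * s * (y * b) + b * b' = 0 := by
      rcases mul_eq_zero.mp
        (show (x + y) * (2 * s * (y * b) + b * b') = 0 by linear_combination hG3) with h | h
      · exact absurd h hune
      · exact h
    rcases mul_eq_zero.mp (show b * (2 * s * y + b') = 0 by linear_combination hbb2) with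
      hb0 | hbp
    · rw [hb0] at hW
      have : b' = 0 := by
        rcases mul_eq_zero.mp (show y' * b' = 0 by linarith [hW]) with h | h
        · exact absurd h hy0'
        · exact h
      exact hbb (by rw [hb0, this])
    · have hb'val : b' = -(2 * s * y) := by linarith [hbp]
      have hxy : |x| ≤ 4 * |y| := by
        have h4 : (2:ℝ) ^ (k₁ + 1) ≤ 2 ^ (k₂ + 1) :=
          zpow_le_zpow_right₀ (by norm_num) (by omega)
        have h5 : (2:ℝ) ^ (k₂ + 1) = 4 * 2 ^ (k₂ - 1) := by
          rw [show k₂ + 1 = (k₂ - 1) + 2 by ring, zpow_add₀ (two_ne_zero)]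
          ring
        linarith
      have hu5 : x + y ≤ 5 * |y| := by
        have := le_abs_self x
        have := le_abs_self y
        linarith
      have : |b'| = 2 * s * |y| := by
        rw [hb'val, abs_neg, abs_mul, abs_of_nonneg (by linarith : (0:ℝ) ≤ 2 * s)]
      have hyabs : 0 < |y| := abs_pos.mpr hy0
      have h34 : 3.4 * |y| ≤ 2 * s * |y| :=
        mul_le_mul_of_nonneg_right (by linarith) (abs_nonneg y)
      linarith

lemma inner_lb (s X Y R : ℝ) (hs : 1.7 ≤ s) (hX : 0 ≤ X) (hY : 0 ≤ Y) (hXY : X ≤ 4 * Y)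
    (hR : R ≤ 1 / 1024) (hR0 : 0 ≤ R) : 3 * (X * Y) ≤ X * Y * (2 * s - 2 * R) - X * (Y + X) * R := by
  have h1 : X * (Y + X) * R ≤ X * (5 * Y) * (1 / 1024) := by
    have : (0:ℝ) ≤ X * (Y + X) := by positivity
    gcongr
    linarith
  have h2 : X * Y * 3.39 ≤ X * Y * (2 * s - 2 * R) := by
    have : (0:ℝ) ≤ X * Y := by positivity
    gcongr
    linarith
  nlinarith [mul_nonneg hX hY]

set_option maxHeartbeats 1000000 in
lemma det_lower (k₁ k₂ k : ℤ) (hk : k₁ ≤ k₂) (β₂ x y b : ℝ)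
    (hx1 : (2:ℝ) ^ (k₁ - 1) ≤ |x|) (hx2 : |x| ≤ (2:ℝ) ^ (k₁ + 1))
    (hy1 : (2:ℝ) ^ (k₂ - 1) ≤ |y|) (hy2 : |y| ≤ (2:ℝ) ^ (k₂ + 1))
    (hu0 : 0 ≤ x + y) (hb : |b| ≤ (2:ℝ) ^ (-10 : ℤ) * (x + y))
    (hu1 : (2:ℝ) ^ (k - 1) ≤ |x + y|) :
    (2:ℝ) ^ (k₁ + k₂ + k) ≤
      |(-(2 * Real.sqrt 3 * y) + β₂) * (x * y * (2 * Real.sqrt 3 + 2 * b / (x + y))) -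
          x * (x * b * (2 * Real.sqrt 3 + b / (x + y)) - x * y * b ^ 2 / (x + y) ^ 2) -
        ((2 * Real.sqrt 3 * x + b + β₂) * (x * y * (2 * Real.sqrt 3 + 2 * b / (x + y))) -
          x * (y * b * (2 * Real.sqrt 3 + b / (x + y)) - x * y * b ^ 2 / (x + y) ^ 2))| := by
  set s := Real.sqrt 3 with hs
  have hslb : (1.7 : ℝ) ≤ s := sqrt3_lb
  have hsub : s ≤ 1.8 := sqrt3_ub
  have hA : (0:ℝ) < 2 ^ (k₁ - 1) := by positivity
  have hB : (0:ℝ) < 2 ^ (k₂ - 1) := by positivity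
  have hU : (0:ℝ) < 2 ^ (k - 1) := by positivity
  have hupos : 0 < x + y := lt_of_lt_of_le hU (by rwa [abs_of_nonneg hu0] at hu1)
  have huU : (2:ℝ) ^ (k - 1) ≤ x + y := by rwa [abs_of_nonneg hu0] at hu1
  have hune : x + y ≠ 0 := ne_of_gt hupos
  set r := b / (x + y) with hrdef
  have hR : |r| ≤ 1 / 1024 := by
    rw [hrdef, abs_div, abs_of_pos hupos, div_le_iff₀ hupos]
    calc |b| ≤ (2:ℝ) ^ (-10 : ℤ) * (x + y) := hb
      _ = 1 / 1024 * (x + y) := by norm_num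
  have hrl := (abs_le.mp hR).1
  have hru := (abs_le.mp hR).2
  have hF : (-(2 * s * y) + β₂) * (x * y * (2 * s + 2 * b / (x + y))) -
          x * (x * b * (2 * s + b / (x + y)) - x * y * b ^ 2 / (x + y) ^ 2) -
        ((2 * s * x + b + β₂) * (x * y * (2 * s + 2 * b / (x + y))) -
          x * (y * b * (2 * s + b / (x + y)) - x * y * b ^ 2 / (x + y) ^ 2)) =
      -((x + y) * ((2 * s + r) * (x * y * (2 * s + 2 * r) - x * (y - x) * r))) := by
    rw [hrdef]
    field_simp
    ring
  rw [hF, abs_neg, abs_mul, abs_mul, abs_of_pos hupos,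
    abs_of_pos (show (0:ℝ) < 2 * s + r by linarith)]
  have hxy : |x| ≤ 4 * |y| := by
    have h4 : (2:ℝ) ^ (k₁ + 1) ≤ 2 ^ (k₂ + 1) :=
      zpow_le_zpow_right₀ (by norm_num) (by omega)
    have h5 : (2:ℝ) ^ (k₂ + 1) = 4 * 2 ^ (k₂ - 1) := by
      rw [show k₂ + 1 = (k₂ - 1) + 2 by ring, zpow_add₀ (two_ne_zero)]
      ring
    linarith
  have habs1 : |x * y * (2 * s + 2 * r)| = |x| * |y| * (2 * s + 2 * r) := by
    rw [abs_mul, abs_mul, abs_of_pos (show (0:ℝ) < 2 * s + 2 * r by linarith)]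
  have habs2 : |x * (y - x) * r| ≤ |x| * (|y| + |x|) * |r| := by
    rw [abs_mul, abs_mul]
    gcongr
    exact abs_sub _ _
  have hinner : 3 * (|x| * |y|) ≤ |x * y * (2 * s + 2 * r) - x * (y - x) * r| := by
    have key := inner_lb s |x| |y| |r| hslb (abs_nonneg x) (abs_nonneg y) hxy hR (abs_nonneg r)
    have lb := abs_sub_abs_le_abs_sub (x * y * (2 * s + 2 * r)) (x * (y - x) * r)
    have : |x| * |y| * (2 * s - 2 * |r|) ≤ |x| * |y| * (2 * s + 2 * r) := by
      have : (0:ℝ) ≤ |x| * |y| := by positivity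
      gcongr
      linarith [neg_abs_le r]
    linarith [habs1 ▸ lb]
  have step1 : 3 * ((2:ℝ) ^ (k₁ - 1) * 2 ^ (k₂ - 1)) ≤
      |x * y * (2 * s + 2 * r) - x * (y - x) * r| := by
    refine le_trans ?_ hinner
    have : (2:ℝ) ^ (k₁ - 1) * 2 ^ (k₂ - 1) ≤ |x| * |y| :=
      mul_le_mul hx1 hy1 (le_of_lt hB) (abs_nonneg x)
    linarith
  have step2 : (3:ℝ) ≤ 2 * s + r := by linarith
  have i1 : (3:ℝ) * (3 * ((2:ℝ) ^ (k₁ - 1) * 2 ^ (k₂ - 1))) ≤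
      (2 * s + r) * |x * y * (2 * s + 2 * r) - x * (y - x) * r| :=
    mul_le_mul step2 step1 (by positivity) (by linarith)
  have i2 : (2:ℝ) ^ (k - 1) * ((3:ℝ) * (3 * ((2:ℝ) ^ (k₁ - 1) * 2 ^ (k₂ - 1)))) ≤
      (x + y) * ((2 * s + r) * |x * y * (2 * s + 2 * r) - x * (y - x) * r|) :=
    mul_le_mul huU i1 (by positivity) (le_of_lt hupos)
  refine le_trans ?_ i2
  have hsplit : (2:ℝ) ^ (k₁ + k₂ + k) = 8 * (2 ^ (k₁ - 1) * 2 ^ (k₂ - 1) * 2 ^ (k - 1)) := by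
    rw [show k₁ + k₂ + k = (k₁ - 1) + ((k₂ - 1) + ((k - 1) + 3)) by ring,
      zpow_add₀ (two_ne_zero : (2:ℝ) ≠ 0), zpow_add₀ (two_ne_zero : (2:ℝ) ≠ 0),
      zpow_add₀ (two_ne_zero : (2:ℝ) ≠ 0)]
    norm_num
    ring
  rw [hsplit]
  nlinarith [mul_pos (mul_pos hA hB) hU]

instance : (volume : Measure (ℝ × ℝ)).IsAddHaarMeasure :=
  MeasureTheory.Measure.prod.instIsAddHaarMeasure _ _

instance : (volume : Measure (ℝ × ℝ × ℝ)).IsAddHaarMeasure :=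
  MeasureTheory.Measure.prod.instIsAddHaarMeasure _ _

theorem stmt8 :
    ∃ C : ℝ, 0 < C ∧
      ∀ (k₁ k₂ k : ℤ), k₁ ≤ k₂ →
      ∀ (β₂ : ℝ) (g : ℝ × ℝ × ℝ → ℝ),
        (∀ p, 0 ≤ g p) → MemLp g 2 volume →
        Function.support g ⊆ {p : ℝ × ℝ × ℝ | p.1 ∈ Itilde k} →
        (∫⁻ q in {q : ℝ × ℝ × ℝ | q.1 ∈ Itilde k₁ ∧ q.2.1 ∈ Itilde k₂ ∧
              0 ≤ q.1 + q.2.1 ∧ |q.2.2| ≤ (2 : ℝ) ^ (-10 : ℤ) * (q.1 + q.2.1)},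
            ENNReal.ofReal (|g (q.1 + q.2.1,
              Real.sqrt 3 * q.1 ^ 2 - Real.sqrt 3 * q.2.1 ^ 2 + q.2.2 * q.1 +
                β₂ * (q.1 + q.2.1),
              q.1 * q.2.1 * q.2.2 * (2 * Real.sqrt 3 + q.2.2 / (q.1 + q.2.1)))| ^ 2)) ^
          ((1 : ℝ) / 2) ≤
        ENNReal.ofReal (C * (2 : ℝ) ^ (-((k₁ : ℝ) + (k₂ : ℝ) + (k : ℝ)) / 2)) *
          eLpNorm g 2 volume := by
  refine ⟨1, one_pos, fun k₁ k₂ k hk β₂ g hg0 hg2 hsupp => ?_⟩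
  set s := Real.sqrt 3 with hs
  set G : ℝ × ℝ × ℝ → ℝ≥0∞ := fun y => ENNReal.ofReal (|g y| ^ 2) with hG
  set S' : Set (ℝ × ℝ × ℝ) := {q : ℝ × ℝ × ℝ | q.1 ∈ Itilde k₁ ∧ q.2.1 ∈ Itilde k₂ ∧
      0 ≤ q.1 + q.2.1 ∧ |q.2.2| ≤ (2 : ℝ) ^ (-10 : ℤ) * (q.1 + q.2.1)} with hS'def
  set T : Set (ℝ × ℝ × ℝ) := Tset k₁ k₂ k with hTdef
  -- measurability of the sets
  have hS' : MeasurableSet S' := by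
    rw [hS'def]
    simp only [Itilde, Set.mem_setOf_eq]
    apply MeasurableSet.inter
    · exact (measurableSet_le measurable_const measurable_fst.abs).inter
        (measurableSet_le measurable_fst.abs measurable_const)
    apply MeasurableSet.inter
    · exact (measurableSet_le measurable_const (measurable_fst.comp measurable_snd).abs).inter
        (measurableSet_le (measurable_fst.comp measurable_snd).abs measurable_const)
    apply MeasurableSet.inter
    · exact measurableSet_le measurable_const
        (measurable_fst.add (measurable_fst.comp measurable_snd))
    · exact measurableSet_le (measurable_snd.comp measurable_snd).abs
        ((measurable_fst.add (measurable_fst.comp measurable_snd)).const_mul _)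
  have hT : MeasurableSet T := by
    rw [hTdef]
    simp only [Tset, Itilde, Set.mem_setOf_eq]
    apply MeasurableSet.inter
    · exact (measurableSet_le measurable_const measurable_fst.abs).inter
        (measurableSet_le measurable_fst.abs measurable_const)
    apply MeasurableSet.inter
    · exact (measurableSet_le measurable_const (measurable_fst.comp measurable_snd).abs).inter
        (measurableSet_le (measurable_fst.comp measurable_snd).abs measurable_const)
    apply MeasurableSet.inter
    · exact measurableSet_le measurable_const
        (measurable_fst.add (measurable_fst.comp measurable_snd))
    apply MeasurableSet.inter
    · exact measurableSet_le (measurable_snd.comp measurable_snd).abs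
        ((measurable_fst.add (measurable_fst.comp measurable_snd)).const_mul _)
    · exact (measurableSet_le measurable_const
          (measurable_fst.add (measurable_fst.comp measurable_snd)).abs).inter
        (measurableSet_le (measurable_fst.add (measurable_fst.comp measurable_snd)).abs
          measurable_const)
  -- the derivative
  set f' : ℝ × ℝ × ℝ → (ℝ × ℝ × ℝ →L[ℝ] ℝ × ℝ × ℝ) := fun q =>
    L3 1 1 0
      (2 * s * q.1 + q.2.2 + β₂) (-(2 * s * q.2.1) + β₂) q.1
      (q.2.1 * q.2.2 * (2 * s + q.2.2 / (q.1 + q.2.1)) -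
        q.1 * q.2.1 * q.2.2 ^ 2 / (q.1 + q.2.1) ^ 2)
      (q.1 * q.2.2 * (2 * s + q.2.2 / (q.1 + q.2.1)) -
        q.1 * q.2.1 * q.2.2 ^ 2 / (q.1 + q.2.1) ^ 2)
      (q.1 * q.2.1 * (2 * s + 2 * q.2.2 / (q.1 + q.2.1))) with hf'def
  have hupos : ∀ q ∈ T, 0 < q.1 + q.2.1 := by
    rintro q hq
    obtain ⟨_, _, hu0, _, hu1, _⟩ := hq
    have : (0:ℝ) < 2 ^ (k - 1) := by positivity
    have := hu1
    rw [abs_of_nonneg hu0] at this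
    linarith
  have hf' : ∀ q ∈ T, HasFDerivWithinAt (Phi β₂) (f' q) T q := fun q hq =>
    (hasFDerivAt_Phi s β₂ q (ne_of_gt (hupos q hq))).hasFDerivWithinAt
  have hinj : Set.InjOn (Phi β₂) T := Tset_injOn k₁ k₂ k hk β₂
  -- determinant lower bound on T
  set D : ℝ≥0∞ := ENNReal.ofReal ((2:ℝ) ^ (k₁ + k₂ + k)) with hDdef
  have hD0 : D ≠ 0 := by
    rw [hDdef]
    simp only [ne_eq, ENNReal.ofReal_eq_zero, not_le]
    positivity
  have hDtop : D ≠ ⊤ := ENNReal.ofReal_ne_top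
  have hdet : ∀ q ∈ T, D ≤ ENNReal.ofReal |(f' q).det| := by
    rintro ⟨x, y, b⟩ hq
    obtain ⟨⟨hx1, hx2⟩, ⟨hy1, hy2⟩, hu0, hb, hu1, hu2⟩ := hq
    apply ENNReal.ofReal_le_ofReal
    rw [hf'def]
    simp only
    rw [det_L3']
    calc (2:ℝ) ^ (k₁ + k₂ + k) ≤
        |(-(2 * s * y) + β₂) * (x * y * (2 * s + 2 * b / (x + y))) -
            x * (x * b * (2 * s + b / (x + y)) - x * y * b ^ 2 / (x + y) ^ 2) -
          ((2 * s * x + b + β₂) * (x * y * (2 * s + 2 * b / (x + y))) -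
            x * (y * b * (2 * s + b / (x + y)) - x * y * b ^ 2 / (x + y) ^ 2))| :=
        det_lower k₁ k₂ k hk β₂ x y b hx1 hx2 hy1 hy2 hu0 hb hu1
      _ = _ := by
        congr 1
        ring
  -- the change of variables reduction
  have hchg := lintegral_image_eq_lintegral_abs_det_fderiv_mul volume hT hf' hinj G
  -- the main integral bound
  have main : (∫⁻ q in S', G (Phi β₂ q)) ≤ D⁻¹ * ∫⁻ y, G y := by
    have e1 : (∫⁻ q in S', G (Phi β₂ q)) = ∫⁻ q in S', T.indicator (fun q => G (Phi β₂ q)) q := by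
      refine setLIntegral_congr_fun hS' (fun q hq => ?_)
      by_cases hqT : q ∈ T
      · rw [Set.indicator_of_mem hqT]
      · rw [Set.indicator_of_notMem hqT]
        have hnotk : (q.1 + q.2.1) ∉ Itilde k := by
          intro hmem
          exact hqT ⟨hq.1, hq.2.1, hq.2.2.1, hq.2.2.2, hmem⟩
        have hzero : g (Phi β₂ q) = 0 := by
          by_contra hne
          exact hnotk (hsupp (Function.mem_support.mpr hne))
        rw [hG]
        simp only [Phi] at hzero ⊢
        rw [hzero]
        simp
    rw [e1]
    calc ∫⁻ q in S', T.indicator (fun q => G (Phi β₂ q)) q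
        ≤ ∫⁻ q, T.indicator (fun q => G (Phi β₂ q)) q := setLIntegral_le_lintegral _ _
      _ = ∫⁻ q in T, G (Phi β₂ q) := by rw [lintegral_indicator]; exact hT
      _ ≤ D⁻¹ * ∫⁻ q in T, ENNReal.ofReal |(f' q).det| * G (Phi β₂ q) := by
          rw [← lintegral_const_mul' _ _ (ENNReal.inv_ne_top.mpr hD0)]
          refine lintegral_mono_ae ((ae_restrict_iff' hT).mpr (ae_of_all _ fun q hq => ?_))
          calc G (Phi β₂ q) = D⁻¹ * (D * G (Phi β₂ q)) := by
                rw [← mul_assoc, ENNReal.inv_mul_cancel hD0 hDtop, one_mul]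
            _ ≤ D⁻¹ * (ENNReal.ofReal |(f' q).det| * G (Phi β₂ q)) := by
                gcongr
                exact hdet q hq
      _ = D⁻¹ * ∫⁻ y in Phi β₂ '' T, G y := by rw [hchg]
      _ ≤ D⁻¹ * ∫⁻ y, G y := by
          gcongr
          exact Measure.restrict_le_self
  -- identify the L² norm
  have hN : (∫⁻ y, G y) = (eLpNorm g 2 volume) ^ (2:ℝ) := by
    rw [eLpNorm_eq_lintegral_rpow_enorm_toReal (by norm_num) (by norm_num)]
    rw [← ENNReal.rpow_mul]
    simp only [ENNReal.toReal_ofNat]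
    norm_num
    refine lintegral_congr fun y => ?_
    rw [hG]
    simp only
    rw [Real.enorm_eq_ofReal_abs, ← ENNReal.ofReal_pow (abs_nonneg _)]
  -- conclude
  have main2 : (∫⁻ q in S', G (Phi β₂ q)) ≤ D⁻¹ * (eLpNorm g 2 volume) ^ (2:ℝ) := by
    rw [← hN]; exact main
  calc (∫⁻ q in S', G (Phi β₂ q)) ^ ((1:ℝ)/2)
      ≤ (D⁻¹ * (eLpNorm g 2 volume) ^ (2:ℝ)) ^ ((1:ℝ)/2) :=
        ENNReal.rpow_le_rpow main2 (by norm_num)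
    _ = (D⁻¹) ^ ((1:ℝ)/2) * eLpNorm g 2 volume := by
        rw [ENNReal.mul_rpow_of_nonneg _ _ (by norm_num : (0:ℝ) ≤ 1/2), ← ENNReal.rpow_mul]
        norm_num
    _ ≤ ENNReal.ofReal (1 * (2:ℝ) ^ (-((k₁:ℝ) + (k₂:ℝ) + (k:ℝ))/2)) * eLpNorm g 2 volume := by
        gcongr
        rw [hDdef, ← ENNReal.rpow_neg_one, ← ENNReal.rpow_mul,
          ENNReal.ofReal_rpow_of_pos (by positivity)]
        apply ENNReal.ofReal_le_ofReal
        rw [← Real.rpow_intCast 2 (k₁ + k₂ + k), ← Real.rpow_mul (by norm_num), one_mul]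
        apply le_of_eq
        congr 1
        push_cast
        ring
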